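/- Let n = 2^k with k ≥ 2 and define s_n(t) = ∑_{a ∈ G_n^1(1)} (w^{at} − w^{−at})/i with w = e^{2πi/n}. Then s_n(t) = 2^{k−1} if t ≡ 2^{k−2} (mod n), s_n(t) = −2^{k−1} if t ≡ 3·2^{k−2} (mod n), and s_n(t) = 0 otherwise. -/

import Mathlib

open Finset

/-- `G_n^1(1) = {a : 1 ≤ a ≤ n-1, gcd(a,n)=1, a ≡ 1 (mod 4)}`. -/
def Grone (n r : ℕ) : Finset ℕ :=
  (Finset.range n).filter (fun a => 1 ≤ a ∧ Nat.gcd a n = 1 ∧ a % 4 = r)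

/-- `s_n(t) = ∑_{a ∈ G_n^1(1)} 2 sin(2πat/n)`. -/
noncomputable def sSum (n t : ℕ) : ℝ :=
  ∑ a ∈ Grone n 1, 2 * Real.sin (2 * Real.pi * a * t / n)

lemma pow_four_mul (k : ℕ) (hk : 2 ≤ k) : (2:ℕ)^k = 4 * 2^(k-2) := by
  conv_lhs => rw [show k = k-2+2 by omega, pow_add]
  ring

lemma grone_pow (k : ℕ) (hk : 2 ≤ k) :
    Grone (2^k) 1 = (Finset.range (2^(k-2))).image (fun j => 4*j+1) := by
  have h4 := pow_four_mul k hk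
  ext a
  simp only [Grone, mem_filter, mem_range, mem_image]
  constructor
  · rintro ⟨h1, _, _, h5⟩
    exact ⟨a/4, by omega, by omega⟩
  · rintro ⟨j, hj, rfl⟩
    refine ⟨by omega, by omega, ?_, by omega⟩
    have hc : Nat.Coprime 2 (4*j+1) := (Nat.prime_two.coprime_iff_not_dvd).mpr (by omega)
    exact hc.symm.pow_right k

lemma sSum_pow (k : ℕ) (hk : 2 ≤ k) (t : ℕ) :
    sSum (2^k) t
      = ∑ j ∈ Finset.range (2^(k-2)),
          2 * Real.sin (2 * Real.pi * (4*(j:ℝ)+1) * t / (4 * ((2^(k-2) : ℕ) : ℝ))) := by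
  have h4 := pow_four_mul k hk
  rw [sSum, grone_pow k hk, Finset.sum_image (by intro x _ y _ h; beta_reduce at h; omega)]
  refine Finset.sum_congr rfl fun j _ => ?_
  congr 1
  have h5 : ((2^k : ℕ) : ℝ) = 4 * ((2^(k-2) : ℕ) : ℝ) := by exact_mod_cast h4
  rw [h5]
  push_cast
  ring

lemma exp_ne_one (m t : ℕ) (hm : 0 < m) (h : ¬ m ∣ t) :
    Complex.exp ((2*Real.pi*t/m : ℝ) * Complex.I) ≠ 1 := by
  intro he
  rw [Complex.exp_eq_one_iff] at he
  obtain ⟨z, hz⟩ := he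
  apply h
  have hI : ((2*Real.pi*t/m : ℝ) : ℂ) = (z : ℂ) * (2 * (Real.pi : ℂ)) := by
    refine mul_right_cancel₀ Complex.I_ne_zero ?_
    rw [hz]; ring
  have hR : (2*Real.pi*t/m : ℝ) = (z : ℝ) * (2 * Real.pi) := by
    exact_mod_cast hI
  have hm' : (m:ℝ) ≠ 0 := by positivity
  have hR' : 2 * Real.pi * (t:ℝ) = 2 * Real.pi * ((z:ℝ) * m) := by
    field_simp at hR
    rw [hR]; ring
  have ht : (t:ℝ) = (z:ℝ) * m :=
    mul_left_cancel₀ (by positivity : (2*Real.pi : ℝ) ≠ 0) hR'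
  have ht' : (t:ℤ) = z * m := by exact_mod_cast ht
  have : (m:ℤ) ∣ (t:ℤ) := ⟨z, by rw [ht', mul_comm]⟩
  exact_mod_cast this

lemma exp_pow_eq_one (m t : ℕ) (hm : 0 < m) :
    Complex.exp ((2*Real.pi*t/m : ℝ) * Complex.I) ^ m = 1 := by
  rw [← Complex.exp_nat_mul]
  have hmc : (m:ℂ) ≠ 0 := Nat.cast_ne_zero.mpr hm.ne'
  have : (m:ℂ) * (((2*Real.pi*t/m : ℝ) : ℂ) * Complex.I) = (t:ℤ) * (2 * Real.pi * Complex.I) := by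
    push_cast
    field_simp
  rw [this, Complex.exp_int_mul_two_pi_mul_I]

lemma sum_sin_eq_zero (m t : ℕ) (hm : 0 < m) (h : ¬ m ∣ t) :
    ∑ j ∈ Finset.range m, 2 * Real.sin (2 * Real.pi * (4*(j:ℝ)+1) * t / (4 * m)) = 0 := by
  have hm' : (m:ℝ) ≠ 0 := by positivity
  set c : ℝ := 2*Real.pi*t/(4*m) with hc
  set φ : ℝ := 2*Real.pi*t/m with hφ
  have hangle : ∀ j : ℕ, 2 * Real.pi * (4*(j:ℝ)+1) * t / (4 * m) = c + j * φ := by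
    intro j
    rw [hc, hφ]
    field_simp
    ring
  have hsum : ∑ j ∈ Finset.range m, Complex.exp (((c + j * φ : ℝ)) * Complex.I) = 0 := by
    have hterm : ∀ j ∈ Finset.range m,
        Complex.exp (((c + j * φ : ℝ)) * Complex.I)
          = Complex.exp ((c:ℝ) * Complex.I) * (Complex.exp ((φ:ℝ) * Complex.I)) ^ j := by
      intro j _
      rw [← Complex.exp_nat_mul, ← Complex.exp_add]
      push_cast
      ring_nf
    rw [Finset.sum_congr rfl hterm, ← Finset.mul_sum,
      geom_sum_eq (exp_ne_one m t hm h), exp_pow_eq_one m t hm]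
    simp
  calc ∑ j ∈ Finset.range m, 2 * Real.sin (2 * Real.pi * (4*(j:ℝ)+1) * t / (4 * m))
      = 2 * ∑ j ∈ Finset.range m, (Complex.exp (((c + j * φ : ℝ)) * Complex.I)).im := by
        rw [Finset.mul_sum]
        refine Finset.sum_congr rfl fun j _ => ?_
        rw [Complex.exp_ofReal_mul_I_im, hangle j]
    _ = 0 := by rw [← Complex.im_sum, hsum]; simp

lemma sin_table (s : ℕ) :
    Real.sin (Real.pi * s / 2)
      = if s % 4 = 1 then 1 else if s % 4 = 3 then -1 else 0 := by
  have hs : s = s % 4 + (s / 4) * 4 := by omega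
  have hcast : (s:ℝ) = ((s % 4 : ℕ) : ℝ) + ((s / 4 : ℕ) : ℝ) * 4 := by exact_mod_cast hs
  have h1 : Real.pi * s / 2
      = Real.pi * ((s % 4 : ℕ) : ℝ) / 2 + ((s / 4 : ℕ) : ℤ) * (2 * Real.pi) := by
    rw [Int.cast_natCast, hcast]; ring
  rw [h1, Real.sin_add_int_mul_two_pi]
  have e1 : Real.sin (Real.pi * 1 / 2) = 1 := by
    rw [show Real.pi * 1 / 2 = Real.pi / 2 by ring]; exact Real.sin_pi_div_two
  have e2 : Real.sin (Real.pi * 2 / 2) = 0 := by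
    rw [show Real.pi * 2 / 2 = Real.pi by ring]; exact Real.sin_pi
  have e3 : Real.sin (Real.pi * 3 / 2) = -1 := by
    rw [show Real.pi * 3 / 2 = Real.pi / 2 + Real.pi by ring, Real.sin_add_pi,
      Real.sin_pi_div_two]
  have h4 : s % 4 = 0 ∨ s % 4 = 1 ∨ s % 4 = 2 ∨ s % 4 = 3 := by omega
  rcases h4 with h|h|h|h <;> rw [h] <;> push_cast <;> norm_num [e1, e2, e3]

lemma sum_sin_dvd (m s : ℕ) (hm : 0 < m) :
    ∑ j ∈ Finset.range m, 2 * Real.sin (2 * Real.pi * (4*(j:ℝ)+1) * ((m:ℝ) * s) / (4 * m))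
      = 2 * m * Real.sin (Real.pi * s / 2) := by
  have hm' : (m:ℝ) ≠ 0 := by positivity
  have hterm : ∀ j ∈ Finset.range m,
      2 * Real.sin (2 * Real.pi * (4*(j:ℝ)+1) * ((m:ℝ) * s) / (4 * m))
        = 2 * Real.sin (Real.pi * s / 2) := by
    intro j _
    congr 1
    have : 2 * Real.pi * (4*(j:ℝ)+1) * ((m:ℝ) * s) / (4 * m)
        = Real.pi * s / 2 + ((j * s : ℕ) : ℤ) * (2 * Real.pi) := by
      push_cast
      field_simp
      ring
    rw [this, Real.sin_add_int_mul_two_pi]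
  rw [Finset.sum_congr rfl hterm, Finset.sum_const, Finset.card_range, nsmul_eq_mul]
  ring

theorem stmt17 (k : ℕ) (hk : 2 ≤ k) (n : ℕ) (hn : n = 2 ^ k) (t : ℕ) :
    (t % n = 2 ^ (k - 2) % n → sSum n t = 2 ^ (k - 1)) ∧
    (t % n = (3 * 2 ^ (k - 2)) % n → sSum n t = -(2 ^ (k - 1))) ∧
    (t % n ≠ 2 ^ (k - 2) % n → t % n ≠ (3 * 2 ^ (k - 2)) % n → sSum n t = 0) := by
  subst hn
  obtain ⟨m, hm⟩ : ∃ m, (2:ℕ)^(k-2) = m := ⟨_, rfl⟩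
  have hmpos : 0 < m := hm ▸ Nat.two_pow_pos (k-2)
  have h4 : (2:ℕ)^k = 4 * m := by rw [← hm]; exact pow_four_mul k hk
  have hmod1 : (2:ℕ)^(k-2) % 2^k = m := by
    rw [hm, h4]; exact Nat.mod_eq_of_lt (by omega)
  have hmod3 : (3 * 2^(k-2)) % 2^k = 3 * m := by
    rw [hm, h4]; exact Nat.mod_eq_of_lt (by omega)
  have hS : sSum (2^k) t
      = ∑ j ∈ Finset.range m, 2 * Real.sin (2 * Real.pi * (4*(j:ℝ)+1) * t / (4 * (m:ℝ))) := by
    rw [sSum_pow k hk t, hm]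
  have hpow1n : (2:ℕ)^(k-1) = 2 * m := by
    rw [← hm, show k-1 = k-2+1 by omega, pow_succ]; ring
  have hpow1 : ((2:ℝ))^(k-1) = 2 * (m:ℝ) := by exact_mod_cast hpow1n
  have hdvd : ∀ s : ℕ, t = m * s →
      sSum (2^k) t = 2 * m * (if s % 4 = 1 then (1:ℝ) else if s % 4 = 3 then -1 else 0) := by
    intro s hts
    rw [hS, ← sin_table s, ← sum_sin_dvd m s hmpos]
    refine Finset.sum_congr rfl fun j _ => ?_
    congr 2
    rw [hts]
    push_cast
    ring
  have hmodform : ∀ s : ℕ, t = m * s → t % (2^k) = m * (s % 4) := by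
    intro s hts
    rw [h4, hts]
    conv_lhs => rw [show s = 4*(s/4) + s%4 by omega]
    rw [show m * (4*(s/4) + s%4) = (4*m) * (s/4) + m * (s%4) by ring, Nat.mul_add_mod]
    exact Nat.mod_eq_of_lt (by have : s % 4 < 4 := Nat.mod_lt _ (by norm_num); nlinarith)
  have hdvd_of_mod : ∀ r : ℕ, t % 2^k = r * m → m ∣ t := by
    intro r ht
    have h' : t % (4*m) % m = t % m := Nat.mod_mod_of_dvd t ⟨4, by ring⟩
    rw [h4] at ht
    refine Nat.dvd_of_mod_eq_zero ?_
    rw [← h', ht, Nat.mul_mod_left]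
  refine ⟨?_, ?_, ?_⟩
  · intro ht
    rw [hmod1] at ht
    obtain ⟨s, hts⟩ := hdvd_of_mod 1 (by rw [ht]; ring)
    have hmf := hmodform s hts
    have hs4 : s % 4 = 1 := by
      rw [ht] at hmf
      have h4lt : s % 4 = 0 ∨ s % 4 = 1 ∨ s % 4 = 2 ∨ s % 4 = 3 := by omega
      rcases h4lt with h|h|h|h <;> rw [h] at hmf <;> omega
    rw [hdvd s hts, hs4, hpow1]
    norm_num
  · intro ht
    rw [hmod3] at ht
    obtain ⟨s, hts⟩ := hdvd_of_mod 3 (by rw [ht])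
    have hmf := hmodform s hts
    have hs4 : s % 4 = 3 := by
      rw [ht] at hmf
      have h4lt : s % 4 = 0 ∨ s % 4 = 1 ∨ s % 4 = 2 ∨ s % 4 = 3 := by omega
      rcases h4lt with h|h|h|h <;> rw [h] at hmf <;> omega
    rw [hdvd s hts, hs4, hpow1]
    norm_num
  · intro h1 h3
    rw [hmod1] at h1
    rw [hmod3] at h3
    by_cases hdv : m ∣ t
    · obtain ⟨s, hts⟩ := hdv
      have hmf := hmodform s hts
      have hs1 : s % 4 ≠ 1 := fun h => h1 (by rw [hmf, h, mul_one])
      have hs3 : s % 4 ≠ 3 := fun h => h3 (by rw [hmf, h]; ring)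
      rw [hdvd s hts, if_neg hs1, if_neg hs3]
      ring
    · rw [hS]
      exact sum_sin_eq_zero m t hmpos hdv
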